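/- Let λ be a finite Borel measure on a standard Borel space A. Then there exist a finite Borel measure λ' on ℝ and a Borel measurable map π : ℝ → A such that λ is the pushforward of λ' under π and λ' has no atoms, i.e., λ'({r}) = 0 for every r ∈ ℝ. -/
import Mathlib


open MeasureTheory

lemma gaussian_noatom (b : ℝ) : ProbabilityTheory.gaussianReal 0 1 {b} = 0 := by
  rw [ProbabilityTheory.gaussianReal_of_var_ne_zero 0 one_ne_zero]
  exact (withDensity_absolutelyContinuous _ _) (measure_singleton b)

/-- Any finite Borel measure on a (nonempty) standard Borel space is the pushforward
of a nonatomic finite Borel measure on ℝ under a Borel map. -/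
theorem stmt_1 {A : Type*} [MeasurableSpace A] [StandardBorelSpace A] [Nonempty A]
    (lam : Measure A) [IsFiniteMeasure lam] :
    ∃ (lam' : Measure ℝ) (π : ℝ → A), IsFiniteMeasure lam' ∧ Measurable π ∧
      lam = lam'.map π ∧ ∀ r : ℝ, lam' {r} = 0 := by
  set ν : Measure ℝ := ProbabilityTheory.gaussianReal 0 1 with hν
  set μ : Measure (A × ℝ) := lam.prod ν with hμ
  have hnc1 : ¬Countable (A × ℝ) := by
    intro h
    have : Countable ℝ := Function.Surjective.countable (f := Prod.snd (α := A) (β := ℝ))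
      Prod.snd_surjective
    exact Cardinal.not_countable_real (Set.countable_univ)
  have hnc2 : ¬Countable ℝ := fun h => Cardinal.not_countable_real Set.countable_univ
  let e : (A × ℝ) ≃ᵐ ℝ := PolishSpace.measurableEquivOfNotCountable hnc1 hnc2
  refine ⟨μ.map e, Prod.fst ∘ e.symm, ?_, (measurable_fst.comp e.symm.measurable), ?_, ?_⟩
  · exact Measure.isFiniteMeasure_map μ e
  · rw [Measure.map_map (measurable_fst.comp e.symm.measurable) e.measurable]
    have : (Prod.fst ∘ ⇑e.symm) ∘ ⇑e = Prod.fst := by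
      ext x; simp
    rw [this]
    have : μ.map Prod.fst = lam := by
      rw [hμ, Measure.map_fst_prod]
      simp
    rw [this]
  · intro r
    rw [Measure.map_apply e.measurable (measurableSet_singleton r)]
    have : ⇑e ⁻¹' {r} = {e.symm r} := by
      ext x
      constructor
      · intro h; rw [← h]; simp
      · intro h; rw [h]; simp
    rw [this, hμ, ← Set.singleton_prod_singleton, Measure.prod_prod, gaussian_noatom]
    simp
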